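/- The efficient influence function has mean zero (key property underlying Proposition 5): Under the overlap condition and the conditional identification conditions (a), (b), (c) with comparison event C = {G = ∞}, and given 𝒳-measurable integrable outcome functions μ^{s}_{g}, μ^{s'}_{g}, μ^{s}_{c}, μ^{s'}_{c} satisfying, almost surely, μ^{s}_{g}·π_{g,s} = E[1_{G=g}1_{S_s}·ΔY | 𝒳], μ^{s'}_{g}·π_{g,s'} = E[1_{G=g}1_{S_{s'}}·ΔY | 𝒳], μ^{s}_{c}·π_{c,s} = E[1_C 1_{S_s}·ΔY | 𝒳], and μ^{s'}_{c}·π_{c,s'} = E[1_C 1_{S_{s'}}·ΔY | 𝒳], the efficient influence function η := (1_{G=g}1_{S_s}/p)·(ΔY − μ^{s}_{g}) − (1_{G=g}1_{S_{s'}}·π_{g,s}/(p·π_{g,s'}))·(ΔY − μ^{s'}_{g}) − (1_C 1_{S_s}·π_{g,s}/(p·π_{c,s}))·(ΔY − μ^{s}_{c}) + (1_C 1_{S_{s'}}·π_{g,s}/(p·π_{c,s'}))·(ΔY − μ^{s'}_{c}) + (1_{G=g}1_{S_s}/p)·(μ^{s}_{g} − μ^{s'}_{g} − CDATT(g,t))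 − (1_C 1_{S_s}·π_{g,s}/(p·π_{c,s}))·(μ^{s}_{c} − μ^{s'}_{c}) satisfies E[η] = 0, where ΔY = Y_t − Y_{g−1} is the observed change in outcomes. -/

import Mathlib

open MeasureTheory ProbabilityTheory
open scoped Classical

section Aux

/-- Pull-out/tower lemma: integrating an integrable function against a bounded
`𝒳`-measurable weight can be done against its conditional expectation. -/
lemma EIF_tower {Ω : Type*} {𝒳 : MeasurableSpace Ω} [m0 : MeasurableSpace Ω]
    (μ : Measure Ω) [IsProbabilityMeasure μ] (h𝒳 : 𝒳 ≤ m0) {h f : Ω → ℝ}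
    (hh : StronglyMeasurable[𝒳] h) {c : ℝ} (hbd : ∀ᵐ ω ∂μ, ‖h ω‖ ≤ c)
    (hf : Integrable f μ) :
    ∫ ω, h ω * f ω ∂μ = ∫ ω, h ω * (μ[f|𝒳]) ω ∂μ := by
  have hma : AEStronglyMeasurable h μ := (hh.mono h𝒳).aestronglyMeasurable
  have hint : Integrable (fun ω => h ω * f ω) μ := hf.bdd_mul hma hbd
  have key : μ[(fun ω => h ω * f ω)|𝒳] =ᵐ[μ] fun ω => h ω * (μ[f|𝒳]) ω :=
    condExp_mul_of_stronglyMeasurable_left hh hint hf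
  rw [← integral_condExp h𝒳 (f := fun ω => h ω * f ω)]
  exact integral_congr_ae key

/-- Conditional expectation of `1_E * (f - q)` for `𝒳`-measurable `q`, with a
split of `1_E f` into two pieces. -/
lemma EIF_decomp {Ω : Type*} {𝒳 : MeasurableSpace Ω} [m0 : MeasurableSpace Ω]
    (μ : Measure Ω) [IsProbabilityMeasure μ] (h𝒳 : 𝒳 ≤ m0)
    {E : Set Ω} (hE : MeasurableSet E)
    {f u v q : Ω → ℝ} (hq : StronglyMeasurable[𝒳] q) (hqi : Integrable q μ)
    (hfi : Integrable f μ) (hui : Integrable u μ) (hvi : Integrable v μ)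
    (hsplit : E.indicator f = fun ω => E.indicator u ω + E.indicator v ω) :
    μ[(fun ω => E.indicator (fun _ => (1:ℝ)) ω * (f ω - q ω))|𝒳]
      =ᵐ[μ] fun ω => (μ[E.indicator u|𝒳]) ω + (μ[E.indicator v|𝒳]) ω
        - q ω * (μ[E.indicator (fun _ => (1:ℝ))|𝒳]) ω := by
  have hqe : (fun ω => q ω * E.indicator (fun _ => (1:ℝ)) ω) = E.indicator q := by
    funext ω; by_cases h : ω ∈ E <;> simp [h]
  have hqint : Integrable (fun ω => q ω * E.indicator (fun _ => (1:ℝ)) ω) μ := by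
    rw [hqe]; exact hqi.indicator hE
  have hmain : (fun ω => E.indicator (fun _ => (1:ℝ)) ω * (f ω - q ω))
      = E.indicator f - fun ω => q ω * E.indicator (fun _ => (1:ℝ)) ω := by
    funext ω
    simp only [Pi.sub_apply]
    by_cases h : ω ∈ E <;> simp [h]
  rw [hmain]
  have h1 := condExp_sub (m := 𝒳) (μ := μ) (hfi.indicator hE) hqint
  have h2 : μ[E.indicator f|𝒳] =ᵐ[μ] μ[E.indicator u|𝒳] + μ[E.indicator v|𝒳] := by
    rw [hsplit]
    exact condExp_add (hui.indicator hE) (hvi.indicator hE) _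
  have h3 : μ[(fun ω => q ω * E.indicator (fun _ => (1:ℝ)) ω)|𝒳]
      =ᵐ[μ] fun ω => q ω * (μ[E.indicator (fun _ => (1:ℝ))|𝒳]) ω :=
    condExp_mul_of_stronglyMeasurable_left hq hqint ((integrable_const (1:ℝ)).indicator hE)
  filter_upwards [h1, h2, h3] with ω e1 e2 e3
  simp only [Pi.sub_apply, Pi.add_apply] at *
  rw [e1, e2, e3]

/-- Pointwise algebra for `p * η`. -/
lemma EIF_algebra (p q r w z a b c d dy mg mg' mc mc' cd : ℝ) (hp : p ≠ 0) :
    p * (a / p * (dy - mg) - b * q / (p * r) * (dy - mg') - c * q / (p * w) * (dy - mc)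
      + d * q / (p * z) * (dy - mc') + a / p * (mg - mg' - cd) - c * q / (p * w) * (mc - mc'))
    = a * (dy - (mg' + cd)) - q / r * (b * (dy - mg')) - q / w * (c * (dy - mc'))
      + q / z * (d * (dy - mc')) := by
  have e1 : ∀ x u : ℝ, p * (x / p * u) = x * u := by
    intro x u; field_simp
  have e2 : ∀ x s u : ℝ, p * (x / (p * s) * u) = x / s * u := by
    intro x s u
    rcases eq_or_ne s 0 with h | h
    · simp [h]
    · field_simp
  have step : p * (a / p * (dy - mg) - b * q / (p * r) * (dy - mg') - c * q / (p * w) * (dy - mc)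
      + d * q / (p * z) * (dy - mc') + a / p * (mg - mg' - cd) - c * q / (p * w) * (mc - mc'))
      = p * (a / p * ((dy - mg) + (mg - mg' - cd))) - p * (b * q / (p * r) * (dy - mg'))
        - p * (c * q / (p * w) * ((dy - mc) + (mc - mc'))) + p * (d * q / (p * z) * (dy - mc')) := by
    ring
  rw [step, e1 a ((dy - mg) + (mg - mg' - cd)), e2 (b * q) r (dy - mg'),
    e2 (c * q) w ((dy - mc) + (mc - mc')), e2 (d * q) z (dy - mc')]
  ring

end Aux

/-- The efficient influence function has mean zero (key property underlying
Proposition 5): with the never-treated comparison group `C = {G = ∞}` and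
correctly specified outcome models, `E[η] = 0`. -/
theorem efficient_influence_function_mean_zero
    {Ω : Type*} [m0 : MeasurableSpace Ω] (μ : Measure Ω) [IsProbabilityMeasure μ]
    (T : ℕ) (hT : 1 ≤ T)
    (G : Ω → ℕ∞) (hGmeas : Measurable G)
    (hGrange : ∀ ω, G ω = ⊤ ∨ (1 ≤ G ω ∧ G ω ≤ (T : ℕ∞)))
    (Ss : Set Ω) (hSs : MeasurableSet Ss)
    (Ys Ys' Y : ℕ → ℕ∞ → Ω → ℝ)
    (hY : ∀ τ γ ω, Y τ γ ω = if ω ∈ Ss then Ys τ γ ω else Ys' τ γ ω)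
    (hIntYs : ∀ τ γ, Integrable (Ys τ γ) μ)
    (hIntYs' : ∀ τ γ, Integrable (Ys' τ γ) μ)
    (Yobs : ℕ → Ω → ℝ)
    (hYobs : ∀ τ ω, Yobs τ ω = if G ω ≤ (τ : ℕ∞) then Y τ (G ω) ω else Y τ ⊤ ω)
    (hIntYobs : ∀ τ, Integrable (Yobs τ) μ)
    (g t : ℕ) (hg1 : 1 ≤ g) (hgt : g ≤ t) (htT : t ≤ T)
    -- covariate σ-algebra and comparison event
    (𝒳 : MeasurableSpace Ω) (h𝒳 : 𝒳 ≤ m0)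
    (C : Set Ω) (hC : C = {ω | G ω = ⊤})
    -- group-subgroup events
    (Egs Egs' Ecs Ecs' : Set Ω)
    (hEgs : Egs = {ω | G ω = (g : ℕ∞)} ∩ Ss)
    (hEgs' : Egs' = {ω | G ω = (g : ℕ∞)} ∩ Ssᶜ)
    (hEcs : Ecs = C ∩ Ss) (hEcs' : Ecs' = C ∩ Ssᶜ)
    -- propensity scores: versions of the conditional expectations of indicators
    (πgs πgs' πcs πcs' : Ω → ℝ)
    (hπgs_meas : StronglyMeasurable[𝒳] πgs)
    (hπgs : πgs =ᵐ[μ] μ[Egs.indicator (fun _ => (1 : ℝ)) | 𝒳])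
    (hπgs'_meas : StronglyMeasurable[𝒳] πgs')
    (hπgs' : πgs' =ᵐ[μ] μ[Egs'.indicator (fun _ => (1 : ℝ)) | 𝒳])
    (hπcs_meas : StronglyMeasurable[𝒳] πcs)
    (hπcs : πcs =ᵐ[μ] μ[Ecs.indicator (fun _ => (1 : ℝ)) | 𝒳])
    (hπcs'_meas : StronglyMeasurable[𝒳] πcs')
    (hπcs' : πcs' =ᵐ[μ] μ[Ecs'.indicator (fun _ => (1 : ℝ)) | 𝒳])
    -- overlap (Assumption 9)
    (ε : ℝ) (hε : 0 < ε)
    (p : ℝ) (hp : p = (μ Egs).toReal) (hpε : ε < p)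
    (hπgs'_bd : ∀ᵐ ω ∂μ, ε ≤ πgs' ω)
    (hπcs_bd : ∀ᵐ ω ∂μ, ε ≤ πcs ω)
    (hπcs'_bd : ∀ᵐ ω ∂μ, ε ≤ πcs' ω)
    -- observed change and counterfactual untreated changes
    (ΔY Δs Δs' : Ω → ℝ)
    (hΔY : ΔY = fun ω => Yobs t ω - Yobs (g - 1) ω)
    (hΔs : Δs = fun ω => Ys t ⊤ ω - Ys (g - 1) ⊤ ω)
    (hΔs' : Δs' = fun ω => Ys' t ⊤ ω - Ys' (g - 1) ⊤ ω)
    -- (a) conditional no subgroup selection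
    (ha : (fun ω => (μ[Egs.indicator (fun ω' => Ys' t (g : ℕ∞) ω' - Ys' t ⊤ ω') | 𝒳]) ω * πgs' ω)
        =ᵐ[μ] fun ω => (μ[Egs'.indicator (fun ω' => Ys' t (g : ℕ∞) ω' - Ys' t ⊤ ω') | 𝒳]) ω * πgs ω)
    -- (b) conditional parallel trends within each subgroup
    (hb_s : (fun ω => (μ[Egs.indicator Δs | 𝒳]) ω * πcs ω)
        =ᵐ[μ] fun ω => (μ[Ecs.indicator Δs | 𝒳]) ω * πgs ω)
    (hb_s' : (fun ω => (μ[Egs'.indicator Δs' | 𝒳]) ω * πcs' ω)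
        =ᵐ[μ] fun ω => (μ[Ecs'.indicator Δs' | 𝒳]) ω * πgs' ω)
    -- (c) conditional parallel gaps across subgroups for the s'-counterfactual change
    (hc_g : (fun ω => (μ[Egs.indicator Δs' | 𝒳]) ω * πgs' ω)
        =ᵐ[μ] fun ω => (μ[Egs'.indicator Δs' | 𝒳]) ω * πgs ω)
    (hc_c : (fun ω => (μ[Ecs.indicator Δs' | 𝒳]) ω * πcs' ω)
        =ᵐ[μ] fun ω => (μ[Ecs'.indicator Δs' | 𝒳]) ω * πcs ω)
    -- outcome models (𝒳-measurable, integrable)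
    (μg μg' μc μc' : Ω → ℝ)
    (hμg_meas : StronglyMeasurable[𝒳] μg) (hμg_int : Integrable μg μ)
    (hμg'_meas : StronglyMeasurable[𝒳] μg') (hμg'_int : Integrable μg' μ)
    (hμc_meas : StronglyMeasurable[𝒳] μc) (hμc_int : Integrable μc μ)
    (hμc'_meas : StronglyMeasurable[𝒳] μc') (hμc'_int : Integrable μc' μ)
    (hμg : (fun ω => μg ω * πgs ω) =ᵐ[μ] μ[Egs.indicator ΔY | 𝒳])
    (hμg' : (fun ω => μg' ω * πgs' ω) =ᵐ[μ] μ[Egs'.indicator ΔY | 𝒳])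
    (hμc : (fun ω => μc ω * πcs ω) =ᵐ[μ] μ[Ecs.indicator ΔY | 𝒳])
    (hμc' : (fun ω => μc' ω * πcs' ω) =ᵐ[μ] μ[Ecs'.indicator ΔY | 𝒳])
    -- CDATT(g,t)
    (CD : ℝ)
    (hCD : CD = (∫ ω, (Ys t (g : ℕ∞) ω - Ys t ⊤ ω) ∂(μ[|Egs]))
        - (∫ ω, (Ys' t (g : ℕ∞) ω - Ys' t ⊤ ω) ∂(μ[|Egs])))
    -- the efficient influence function
    (η : Ω → ℝ)
    (hη : η = fun ω =>
        (Egs.indicator (fun _ => (1 : ℝ)) ω / p) * (ΔY ω - μg ω)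
        - (Egs'.indicator (fun _ => (1 : ℝ)) ω * πgs ω / (p * πgs' ω)) * (ΔY ω - μg' ω)
        - (Ecs.indicator (fun _ => (1 : ℝ)) ω * πgs ω / (p * πcs ω)) * (ΔY ω - μc ω)
        + (Ecs'.indicator (fun _ => (1 : ℝ)) ω * πgs ω / (p * πcs' ω)) * (ΔY ω - μc' ω)
        + (Egs.indicator (fun _ => (1 : ℝ)) ω / p) * (μg ω - μg' ω - CD)
        - (Ecs.indicator (fun _ => (1 : ℝ)) ω * πgs ω / (p * πcs ω)) * (μc ω - μc' ω)) :
    -- the efficient influence function has mean zero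
    (∫ ω, η ω ∂μ) = 0 := by
  letI inst0 : MeasurableSpace Ω := m0
  -- basic positivity
  have hp0 : (0:ℝ) < p := lt_trans hε hpε
  have hpne : p ≠ 0 := ne_of_gt hp0
  -- measurability of events
  have hMg : MeasurableSet {ω | G ω = (g:ℕ∞)} := hGmeas (measurableSet_singleton _)
  have hMC : MeasurableSet C := by rw [hC]; exact hGmeas (measurableSet_singleton ⊤)
  have hMEgs : MeasurableSet Egs := by rw [hEgs]; exact hMg.inter hSs
  have hMEgs' : MeasurableSet Egs' := by rw [hEgs']; exact hMg.inter hSs.compl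
  have hMEcs : MeasurableSet Ecs := by rw [hEcs]; exact hMC.inter hSs
  have hMEcs' : MeasurableSet Ecs' := by rw [hEcs']; exact hMC.inter hSs.compl
  -- integrability of basic functions
  have hIΔY : Integrable ΔY μ := by rw [hΔY]; exact (hIntYobs t).sub (hIntYobs (g-1))
  have hIΔs : Integrable Δs μ := by rw [hΔs]; exact (hIntYs t ⊤).sub (hIntYs (g-1) ⊤)
  have hIΔs' : Integrable Δs' μ := by rw [hΔs']; exact (hIntYs' t ⊤).sub (hIntYs' (g-1) ⊤)
  have hIFs : Integrable (fun ω => Ys t (g:ℕ∞) ω - Ys t ⊤ ω) μ := (hIntYs t _).sub (hIntYs t ⊤)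
  have hIFs' : Integrable (fun ω => Ys' t (g:ℕ∞) ω - Ys' t ⊤ ω) μ := (hIntYs' t _).sub (hIntYs' t ⊤)
  -- cast facts
  have hle : ((g:ℕ∞) ≤ (t:ℕ∞)) := by exact_mod_cast hgt
  have hnle : ¬ ((g:ℕ∞) ≤ ((g-1:ℕ):ℕ∞)) := by
    intro h
    have : g ≤ g - 1 := by exact_mod_cast h
    omega
  have htop : ∀ τ : ℕ, ¬ ((⊤:ℕ∞) ≤ (τ:ℕ∞)) := by
    intro τ h
    rw [top_le_iff] at h
    exact (ENat.coe_ne_top τ) h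
  -- the observed change coincides with potential-outcome changes on each event
  have split1 : Egs.indicator ΔY = fun ω =>
      Egs.indicator (fun ω => Ys t (g:ℕ∞) ω - Ys t ⊤ ω) ω + Egs.indicator Δs ω := by
    funext ω
    by_cases hω : ω ∈ Egs
    · rw [Set.indicator_of_mem hω, Set.indicator_of_mem hω, Set.indicator_of_mem hω]
      rw [hEgs] at hω
      have hGω : G ω = (g:ℕ∞) := hω.1
      have hSω : ω ∈ Ss := hω.2
      rw [hΔY, hΔs]
      simp only
      rw [hYobs t ω, hYobs (g-1) ω, hGω, if_pos hle, if_neg hnle, hY, hY, if_pos hSω, if_pos hSω]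
      ring
    · rw [Set.indicator_of_notMem hω, Set.indicator_of_notMem hω, Set.indicator_of_notMem hω]
      ring
  have split2 : Egs'.indicator ΔY = fun ω =>
      Egs'.indicator (fun ω => Ys' t (g:ℕ∞) ω - Ys' t ⊤ ω) ω + Egs'.indicator Δs' ω := by
    funext ω
    by_cases hω : ω ∈ Egs'
    · rw [Set.indicator_of_mem hω, Set.indicator_of_mem hω, Set.indicator_of_mem hω]
      rw [hEgs'] at hω
      have hGω : G ω = (g:ℕ∞) := hω.1
      have hSω : ω ∉ Ss := hω.2
      rw [hΔY, hΔs']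
      simp only
      rw [hYobs t ω, hYobs (g-1) ω, hGω, if_pos hle, if_neg hnle, hY, hY, if_neg hSω, if_neg hSω]
      ring
    · rw [Set.indicator_of_notMem hω, Set.indicator_of_notMem hω, Set.indicator_of_notMem hω]
      ring
  have split3 : Ecs.indicator ΔY = fun ω =>
      Ecs.indicator Δs ω + Ecs.indicator (fun _ => (0:ℝ)) ω := by
    funext ω
    by_cases hω : ω ∈ Ecs
    · rw [Set.indicator_of_mem hω, Set.indicator_of_mem hω, Set.indicator_of_mem hω]
      rw [hEcs, hC] at hω
      have hGω : G ω = ⊤ := hω.1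
      have hSω : ω ∈ Ss := hω.2
      rw [hΔY, hΔs]
      simp only
      rw [hYobs t ω, hYobs (g-1) ω, hGω, if_neg (htop t), if_neg (htop (g-1)),
        hY, hY, if_pos hSω, if_pos hSω]
      ring
    · rw [Set.indicator_of_notMem hω, Set.indicator_of_notMem hω, Set.indicator_of_notMem hω]
      ring
  have split4 : Ecs'.indicator ΔY = fun ω =>
      Ecs'.indicator Δs' ω + Ecs'.indicator (fun _ => (0:ℝ)) ω := by
    funext ω
    by_cases hω : ω ∈ Ecs'
    · rw [Set.indicator_of_mem hω, Set.indicator_of_mem hω, Set.indicator_of_mem hω]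
      rw [hEcs', hC] at hω
      have hGω : G ω = ⊤ := hω.1
      have hSω : ω ∉ Ss := hω.2
      rw [hΔY, hΔs']
      simp only
      rw [hYobs t ω, hYobs (g-1) ω, hGω, if_neg (htop t), if_neg (htop (g-1)),
        hY, hY, if_neg hSω, if_neg hSω]
      ring
    · rw [Set.indicator_of_notMem hω, Set.indicator_of_notMem hω, Set.indicator_of_notMem hω]
      ring
  -- bounds on πgs
  have hind01 : ∀ (E : Set Ω), (0:Ω→ℝ) ≤ᵐ[μ] E.indicator (fun _ => (1:ℝ)) ∧
      E.indicator (fun _ => (1:ℝ)) ≤ᵐ[μ] (fun _ => (1:ℝ)) := by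
    intro E
    constructor
    · exact Filter.Eventually.of_forall fun ω => by
        by_cases h : ω ∈ E <;> simp [h]
    · exact Filter.Eventually.of_forall fun ω => by
        by_cases h : ω ∈ E <;> simp [h]
  have hπgs01 : ∀ᵐ ω ∂μ, 0 ≤ πgs ω ∧ πgs ω ≤ 1 := by
    have h0 : (0:Ω→ℝ) ≤ᵐ[μ] μ[Egs.indicator (fun _ => (1:ℝ))|𝒳] :=
      condExp_nonneg (hind01 Egs).1
    have h1 : μ[Egs.indicator (fun _ => (1:ℝ))|𝒳] ≤ᵐ[μ] μ[(fun _ => (1:ℝ))|𝒳] :=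
      condExp_mono ((integrable_const (1:ℝ)).indicator hMEgs) (integrable_const (1:ℝ))
        (hind01 Egs).2
    have hc1 : μ[(fun _ : Ω => (1:ℝ))|𝒳] = fun _ => (1:ℝ) := condExp_const h𝒳 (1:ℝ)
    filter_upwards [h0, h1, hπgs] with ω e0 e1 e2
    rw [hc1] at e1
    constructor
    · rw [e2]; exact e0
    · rw [e2]; exact e1
  -- weights
  have hw2meas : StronglyMeasurable[𝒳] (fun ω => πgs ω / πgs' ω) :=
    (hπgs_meas.measurable.div hπgs'_meas.measurable).stronglyMeasurable
  have hw3meas : StronglyMeasurable[𝒳] (fun ω => πgs ω / πcs ω) :=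
    (hπgs_meas.measurable.div hπcs_meas.measurable).stronglyMeasurable
  have hw4meas : StronglyMeasurable[𝒳] (fun ω => πgs ω / πcs' ω) :=
    (hπgs_meas.measurable.div hπcs'_meas.measurable).stronglyMeasurable
  have hwbd : ∀ (π : Ω → ℝ), (∀ᵐ ω ∂μ, ε ≤ π ω) →
      ∀ᵐ ω ∂μ, ‖πgs ω / π ω‖ ≤ ε⁻¹ := by
    intro π hπbd
    filter_upwards [hπgs01, hπbd] with ω h1 h2
    rw [Real.norm_eq_abs, abs_div]
    have hb1 : |πgs ω| ≤ 1 := abs_le.mpr ⟨by linarith [h1.1], h1.2⟩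
    have hb2 : ε ≤ |π ω| := le_trans h2 (le_abs_self _)
    calc |πgs ω| / |π ω| ≤ 1 / ε := div_le_div₀ zero_le_one hb1 hε hb2
    _ = ε⁻¹ := one_div ε
  have hw2bd := hwbd πgs' hπgs'_bd
  have hw3bd := hwbd πcs hπcs_bd
  have hw4bd := hwbd πcs' hπcs'_bd
  -- the four inner functions and their integrability
  have hI1 : Integrable (fun ω => Egs.indicator (fun _ => (1:ℝ)) ω * (ΔY ω - (μg' ω + CD))) μ := by
    have he : (fun ω => Egs.indicator (fun _ => (1:ℝ)) ω * (ΔY ω - (μg' ω + CD)))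
        = Egs.indicator (fun ω => ΔY ω - (μg' ω + CD)) := by
      funext ω; by_cases h : ω ∈ Egs <;> simp [h]
    rw [he]; exact (hIΔY.sub (hμg'_int.add (integrable_const CD))).indicator hMEgs
  have hI2 : Integrable (fun ω => Egs'.indicator (fun _ => (1:ℝ)) ω * (ΔY ω - μg' ω)) μ := by
    have he : (fun ω => Egs'.indicator (fun _ => (1:ℝ)) ω * (ΔY ω - μg' ω))
        = Egs'.indicator (fun ω => ΔY ω - μg' ω) := by
      funext ω; by_cases h : ω ∈ Egs' <;> simp [h]
    rw [he]; exact (hIΔY.sub hμg'_int).indicator hMEgs'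
  have hI3 : Integrable (fun ω => Ecs.indicator (fun _ => (1:ℝ)) ω * (ΔY ω - μc' ω)) μ := by
    have he : (fun ω => Ecs.indicator (fun _ => (1:ℝ)) ω * (ΔY ω - μc' ω))
        = Ecs.indicator (fun ω => ΔY ω - μc' ω) := by
      funext ω; by_cases h : ω ∈ Ecs <;> simp [h]
    rw [he]; exact (hIΔY.sub hμc'_int).indicator hMEcs
  have hI4 : Integrable (fun ω => Ecs'.indicator (fun _ => (1:ℝ)) ω * (ΔY ω - μc' ω)) μ := by
    have he : (fun ω => Ecs'.indicator (fun _ => (1:ℝ)) ω * (ΔY ω - μc' ω))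
        = Ecs'.indicator (fun ω => ΔY ω - μc' ω) := by
      funext ω; by_cases h : ω ∈ Ecs' <;> simp [h]
    rw [he]; exact (hIΔY.sub hμc'_int).indicator hMEcs'
  have hIw2 : Integrable (fun ω => (πgs ω / πgs' ω) *
      (Egs'.indicator (fun _ => (1:ℝ)) ω * (ΔY ω - μg' ω))) μ :=
    hI2.bdd_mul ((hw2meas.mono h𝒳).aestronglyMeasurable) hw2bd
  have hIw3 : Integrable (fun ω => (πgs ω / πcs ω) *
      (Ecs.indicator (fun _ => (1:ℝ)) ω * (ΔY ω - μc' ω))) μ :=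
    hI3.bdd_mul ((hw3meas.mono h𝒳).aestronglyMeasurable) hw3bd
  have hIw4 : Integrable (fun ω => (πgs ω / πcs' ω) *
      (Ecs'.indicator (fun _ => (1:ℝ)) ω * (ΔY ω - μc' ω))) μ :=
    hI4.bdd_mul ((hw4meas.mono h𝒳).aestronglyMeasurable) hw4bd
  -- conditional-expectation decompositions of the four pieces
  have hA1 := EIF_decomp μ h𝒳 hMEgs (q := fun ω => μg' ω + CD)
    (hμg'_meas.add_const CD) (hμg'_int.add (integrable_const CD))
    hIΔY hIFs hIΔs split1
  have hA2 := EIF_decomp μ h𝒳 hMEgs' (q := μg') hμg'_meas hμg'_int hIΔY hIFs' hIΔs' split2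
  have hA3 := EIF_decomp μ h𝒳 hMEcs (q := μc') hμc'_meas hμc'_int hIΔY hIΔs
    (integrable_const (0:ℝ)) split3
  have hA4 := EIF_decomp μ h𝒳 hMEcs' (q := μc') hμc'_meas hμc'_int hIΔY hIΔs'
    (integrable_const (0:ℝ)) split4
  have hzero : ∀ (E : Set Ω), μ[E.indicator (fun _ => (0:ℝ))|𝒳] = 0 := by
    intro E
    rw [show E.indicator (fun _ => (0:ℝ)) = (0 : Ω → ℝ) from funext fun x => by simp]
    exact condExp_zero
  -- tower steps
  have t1 : ∫ ω, Egs.indicator (fun _ => (1:ℝ)) ω * (ΔY ω - (μg' ω + CD)) ∂μ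
      = ∫ ω, (μ[(fun ω => Egs.indicator (fun _ => (1:ℝ)) ω * (ΔY ω - (μg' ω + CD)))|𝒳]) ω ∂μ :=
    (integral_condExp h𝒳).symm
  have t2 : ∫ ω, (πgs ω / πgs' ω) * (Egs'.indicator (fun _ => (1:ℝ)) ω * (ΔY ω - μg' ω)) ∂μ
      = ∫ ω, (πgs ω / πgs' ω) *
          (μ[(fun ω => Egs'.indicator (fun _ => (1:ℝ)) ω * (ΔY ω - μg' ω))|𝒳]) ω ∂μ :=
    EIF_tower μ h𝒳 hw2meas hw2bd hI2
  have t3 : ∫ ω, (πgs ω / πcs ω) * (Ecs.indicator (fun _ => (1:ℝ)) ω * (ΔY ω - μc' ω)) ∂μ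
      = ∫ ω, (πgs ω / πcs ω) *
          (μ[(fun ω => Ecs.indicator (fun _ => (1:ℝ)) ω * (ΔY ω - μc' ω))|𝒳]) ω ∂μ :=
    EIF_tower μ h𝒳 hw3meas hw3bd hI3
  have t4 : ∫ ω, (πgs ω / πcs' ω) * (Ecs'.indicator (fun _ => (1:ℝ)) ω * (ΔY ω - μc' ω)) ∂μ
      = ∫ ω, (πgs ω / πcs' ω) *
          (μ[(fun ω => Ecs'.indicator (fun _ => (1:ℝ)) ω * (ΔY ω - μc' ω))|𝒳]) ω ∂μ :=
    EIF_tower μ h𝒳 hw4meas hw4bd hI4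
  -- integrability of condexp-weighted terms
  have hC1 : Integrable (fun ω =>
      (μ[(fun ω => Egs.indicator (fun _ => (1:ℝ)) ω * (ΔY ω - (μg' ω + CD)))|𝒳]) ω) μ :=
    integrable_condExp
  have hC2 : Integrable (fun ω => (πgs ω / πgs' ω) *
      (μ[(fun ω => Egs'.indicator (fun _ => (1:ℝ)) ω * (ΔY ω - μg' ω))|𝒳]) ω) μ :=
    integrable_condExp.bdd_mul ((hw2meas.mono h𝒳).aestronglyMeasurable) hw2bd
  have hC3 : Integrable (fun ω => (πgs ω / πcs ω) *
      (μ[(fun ω => Ecs.indicator (fun _ => (1:ℝ)) ω * (ΔY ω - μc' ω))|𝒳]) ω) μ :=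
    integrable_condExp.bdd_mul ((hw3meas.mono h𝒳).aestronglyMeasurable) hw3bd
  have hC4 : Integrable (fun ω => (πgs ω / πcs' ω) *
      (μ[(fun ω => Ecs'.indicator (fun _ => (1:ℝ)) ω * (ΔY ω - μc' ω))|𝒳]) ω) μ :=
    integrable_condExp.bdd_mul ((hw4meas.mono h𝒳).aestronglyMeasurable) hw4bd
  -- a.e. identification of the combined conditional integrand
  have hGΨ : (fun ω =>
      (μ[(fun ω => Egs.indicator (fun _ => (1:ℝ)) ω * (ΔY ω - (μg' ω + CD)))|𝒳]) ω
      - (πgs ω / πgs' ω) *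
        (μ[(fun ω => Egs'.indicator (fun _ => (1:ℝ)) ω * (ΔY ω - μg' ω))|𝒳]) ω
      - (πgs ω / πcs ω) *
        (μ[(fun ω => Ecs.indicator (fun _ => (1:ℝ)) ω * (ΔY ω - μc' ω))|𝒳]) ω
      + (πgs ω / πcs' ω) *
        (μ[(fun ω => Ecs'.indicator (fun _ => (1:ℝ)) ω * (ΔY ω - μc' ω))|𝒳]) ω)
      =ᵐ[μ] fun ω =>
        (μ[Egs.indicator (fun ω => Ys t (g:ℕ∞) ω - Ys t ⊤ ω)|𝒳]) ω
        - (μ[Egs.indicator (fun ω' => Ys' t (g:ℕ∞) ω' - Ys' t ⊤ ω')|𝒳]) ω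
        - CD * πgs ω := by
    filter_upwards [hA1, hA2, hA3, hA4, ha, hb_s, hb_s', hπgs, hπgs', hπcs, hπcs',
      hπgs'_bd, hπcs_bd, hπcs'_bd] with ω e1 e2 e3 e4 fa fb fb' pgs pgs' pcs pcs' bd2 bd3 bd4
    rw [e1, e2, e3, e4, hzero Ecs, hzero Ecs']
    simp only [Pi.zero_apply, add_zero]
    rw [← pgs, ← pgs', ← pcs, ← pcs']
    have hQ : πgs' ω ≠ 0 := ne_of_gt (lt_of_lt_of_le hε bd2)
    have hR : πcs ω ≠ 0 := ne_of_gt (lt_of_lt_of_le hε bd3)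
    have hZ : πcs' ω ≠ 0 := ne_of_gt (lt_of_lt_of_le hε bd4)
    have fa' : (μ[Egs.indicator (fun ω' => Ys' t (g:ℕ∞) ω' - Ys' t ⊤ ω')|𝒳]) ω * πgs' ω
        = (μ[Egs'.indicator (fun ω' => Ys' t (g:ℕ∞) ω' - Ys' t ⊤ ω')|𝒳]) ω * πgs ω := fa
    have fb1 : (μ[Egs.indicator Δs|𝒳]) ω * πcs ω
        = (μ[Ecs.indicator Δs|𝒳]) ω * πgs ω := fb
    have fb2 : (μ[Egs'.indicator Δs'|𝒳]) ω * πcs' ω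
        = (μ[Ecs'.indicator Δs'|𝒳]) ω * πgs' ω := fb'
    set A := (μ[Egs.indicator (fun ω => Ys t (g:ℕ∞) ω - Ys t ⊤ ω)|𝒳]) ω
    set A2 := (μ[Egs.indicator (fun ω' => Ys' t (g:ℕ∞) ω' - Ys' t ⊤ ω')|𝒳]) ω
    set A' := (μ[Egs'.indicator (fun ω' => Ys' t (g:ℕ∞) ω' - Ys' t ⊤ ω')|𝒳]) ω
    set B := (μ[Egs.indicator Δs|𝒳]) ω
    set B' := (μ[Egs'.indicator Δs'|𝒳]) ω
    set Cc := (μ[Ecs.indicator Δs|𝒳]) ω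
    set D := (μ[Ecs'.indicator Δs'|𝒳]) ω
    have d1 : πgs ω / πgs' ω * A' = A2 := by
      field_simp
      first
      | linear_combination fa'
      | linear_combination -fa'
    have d2 : πgs ω / πcs ω * Cc = B := by
      field_simp
      first
      | linear_combination fb1
      | linear_combination -fb1
    have d3 : πgs ω / πgs' ω * B' = πgs ω / πcs' ω * D := by
      field_simp
      first
      | linear_combination (πgs ω) * fb2
      | linear_combination (-(πgs ω)) * fb2
      | linear_combination (πgs ω * πcs ω) * fb2
      | linear_combination (-(πgs ω * πcs ω)) * fb2
    have d4 : πgs ω / πgs' ω * πgs' ω = πgs ω := div_mul_cancel₀ _ hQ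
    have d5 : πgs ω / πcs ω * πcs ω = πgs ω := div_mul_cancel₀ _ hR
    have d6 : πgs ω / πcs' ω * πcs' ω = πgs ω := div_mul_cancel₀ _ hZ
    linear_combination -d1 - d2 - d3 + μg' ω * d4 + μc' ω * d5 - μc' ω * d6
  -- auxiliary integral facts
  have hπgs_int : Integrable πgs μ := integrable_condExp.congr hπgs.symm
  have hπp : ∫ ω, πgs ω ∂μ = p := by
    rw [integral_congr_ae hπgs,
      integral_condExp h𝒳 (f := Egs.indicator (fun _ => (1:ℝ))),
      integral_indicator_const (1:ℝ) hMEgs, smul_eq_mul, mul_one, hp]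
    rfl
  have hcond : ∀ f : Ω → ℝ, ∫ ω, f ω ∂(μ[|Egs]) = p⁻¹ * ∫ ω, Egs.indicator f ω ∂μ := by
    intro f
    rw [ProbabilityTheory.cond, integral_smul_measure, ENNReal.toReal_inv,
      ← integral_indicator hMEgs, smul_eq_mul, ← hp]
  have hCDp : CD * p = (∫ ω, Egs.indicator (fun ω => Ys t (g:ℕ∞) ω - Ys t ⊤ ω) ω ∂μ)
      - ∫ ω, Egs.indicator (fun ω' => Ys' t (g:ℕ∞) ω' - Ys' t ⊤ ω') ω ∂μ := by
    rw [hCD, hcond, hcond]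
    field_simp
  -- pointwise algebra : p * η equals the grouped expression
  have hpη : ∀ ω, p * η ω =
      Egs.indicator (fun _ => (1:ℝ)) ω * (ΔY ω - (μg' ω + CD))
      - (πgs ω / πgs' ω) * (Egs'.indicator (fun _ => (1:ℝ)) ω * (ΔY ω - μg' ω))
      - (πgs ω / πcs ω) * (Ecs.indicator (fun _ => (1:ℝ)) ω * (ΔY ω - μc' ω))
      + (πgs ω / πcs' ω) * (Ecs'.indicator (fun _ => (1:ℝ)) ω * (ΔY ω - μc' ω)) := by
    intro ω
    rw [hη]
    exact EIF_algebra p (πgs ω) (πgs' ω) (πcs ω) (πcs' ω)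
      (Egs.indicator (fun _ => (1:ℝ)) ω) (Egs'.indicator (fun _ => (1:ℝ)) ω)
      (Ecs.indicator (fun _ => (1:ℝ)) ω) (Ecs'.indicator (fun _ => (1:ℝ)) ω)
      (ΔY ω) (μg ω) (μg' ω) (μc ω) (μc' ω) CD hpne
  -- main computation
  have hmain : ∫ ω, p * η ω ∂μ = 0 := by
    have hfun : (fun ω => p * η ω) = fun ω =>
        (Egs.indicator (fun _ => (1:ℝ)) ω * (ΔY ω - (μg' ω + CD))
        - (πgs ω / πgs' ω) * (Egs'.indicator (fun _ => (1:ℝ)) ω * (ΔY ω - μg' ω))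
        - (πgs ω / πcs ω) * (Ecs.indicator (fun _ => (1:ℝ)) ω * (ΔY ω - μc' ω)))
        + (πgs ω / πcs' ω) * (Ecs'.indicator (fun _ => (1:ℝ)) ω * (ΔY ω - μc' ω)) := by
      funext ω; rw [hpη ω]
    have a3 := integral_add (μ := μ)
      (f := fun ω => Egs.indicator (fun _ => (1:ℝ)) ω * (ΔY ω - (μg' ω + CD))
        - (πgs ω / πgs' ω) * (Egs'.indicator (fun _ => (1:ℝ)) ω * (ΔY ω - μg' ω))
        - (πgs ω / πcs ω) * (Ecs.indicator (fun _ => (1:ℝ)) ω * (ΔY ω - μc' ω)))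
      (g := fun ω => (πgs ω / πcs' ω) * (Ecs'.indicator (fun _ => (1:ℝ)) ω * (ΔY ω - μc' ω)))
      (by exact (hI1.sub hIw2).sub hIw3) hIw4
    have a2 := integral_sub (μ := μ)
      (f := fun ω => Egs.indicator (fun _ => (1:ℝ)) ω * (ΔY ω - (μg' ω + CD))
        - (πgs ω / πgs' ω) * (Egs'.indicator (fun _ => (1:ℝ)) ω * (ΔY ω - μg' ω)))
      (g := fun ω => (πgs ω / πcs ω) * (Ecs.indicator (fun _ => (1:ℝ)) ω * (ΔY ω - μc' ω)))
      (by exact hI1.sub hIw2) hIw3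
    have a1 := integral_sub (μ := μ)
      (f := fun ω => Egs.indicator (fun _ => (1:ℝ)) ω * (ΔY ω - (μg' ω + CD)))
      (g := fun ω => (πgs ω / πgs' ω) * (Egs'.indicator (fun _ => (1:ℝ)) ω * (ΔY ω - μg' ω)))
      hI1 hIw2
    have b1 := (integral_sub (μ := μ)
      (f := fun ω => (μ[(fun ω => Egs.indicator (fun _ => (1:ℝ)) ω * (ΔY ω - (μg' ω + CD)))|𝒳]) ω)
      (g := fun ω => (πgs ω / πgs' ω) *
        (μ[(fun ω => Egs'.indicator (fun _ => (1:ℝ)) ω * (ΔY ω - μg' ω))|𝒳]) ω)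
      hC1 hC2).symm
    have b2 := (integral_sub (μ := μ)
      (f := fun ω =>
        (μ[(fun ω => Egs.indicator (fun _ => (1:ℝ)) ω * (ΔY ω - (μg' ω + CD)))|𝒳]) ω
        - (πgs ω / πgs' ω) *
          (μ[(fun ω => Egs'.indicator (fun _ => (1:ℝ)) ω * (ΔY ω - μg' ω))|𝒳]) ω)
      (g := fun ω => (πgs ω / πcs ω) *
        (μ[(fun ω => Ecs.indicator (fun _ => (1:ℝ)) ω * (ΔY ω - μc' ω))|𝒳]) ω)
      (by exact hC1.sub hC2) hC3).symm
    have b3 := (integral_add (μ := μ)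
      (f := fun ω =>
        (μ[(fun ω => Egs.indicator (fun _ => (1:ℝ)) ω * (ΔY ω - (μg' ω + CD)))|𝒳]) ω
        - (πgs ω / πgs' ω) *
          (μ[(fun ω => Egs'.indicator (fun _ => (1:ℝ)) ω * (ΔY ω - μg' ω))|𝒳]) ω
        - (πgs ω / πcs ω) *
          (μ[(fun ω => Ecs.indicator (fun _ => (1:ℝ)) ω * (ΔY ω - μc' ω))|𝒳]) ω)
      (g := fun ω => (πgs ω / πcs' ω) *
        (μ[(fun ω => Ecs'.indicator (fun _ => (1:ℝ)) ω * (ΔY ω - μc' ω))|𝒳]) ω)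
      (by exact (hC1.sub hC2).sub hC3) hC4).symm
    have c1 := integral_sub (μ := μ)
      (f := fun ω =>
        (μ[Egs.indicator (fun ω => Ys t (g:ℕ∞) ω - Ys t ⊤ ω)|𝒳]) ω
        - (μ[Egs.indicator (fun ω' => Ys' t (g:ℕ∞) ω' - Ys' t ⊤ ω')|𝒳]) ω)
      (g := fun ω => CD * πgs ω)
      (by exact integrable_condExp.sub integrable_condExp) (hπgs_int.const_mul CD)
    have c2 := integral_sub (μ := μ)
      (f := fun ω => (μ[Egs.indicator (fun ω => Ys t (g:ℕ∞) ω - Ys t ⊤ ω)|𝒳]) ω)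
      (g := fun ω => (μ[Egs.indicator (fun ω' => Ys' t (g:ℕ∞) ω' - Ys' t ⊤ ω')|𝒳]) ω)
      integrable_condExp integrable_condExp
    rw [hfun, a3, a2, a1, t1, t2, t3, t4, b1, b2, b3, integral_congr_ae hGΨ, c1, c2,
      integral_condExp h𝒳, integral_condExp h𝒳, integral_const_mul, hπp]
    linarith [hCDp]
  have hfin : p * ∫ ω, η ω ∂μ = 0 := by rw [← integral_const_mul]; exact hmain
  exact (mul_eq_zero.mp hfin).resolve_left hpne
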